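/- Let σ ∈ S_{n+1} be an (n+1)-cycle and let H ≤ S_{n+1} be a subgroup generated by transpositions. If σ ∈ H then H = S_{n+1}. Hence a Coxeter element of the symmetric group S_{n+1} is not contained in any proper reflection subgroup. -/

import Mathlib

theorem stmt_16 {n : ℕ} (σ : Equiv.Perm (Fin (n + 1)))
    (hσ : σ.IsCycle) (hlen : σ.support.card = n + 1)
    (H : Subgroup (Equiv.Perm (Fin (n + 1))))
    (hgen : ∃ S : Set (Equiv.Perm (Fin (n + 1))), (∀ τ ∈ S, τ.IsSwap) ∧
      H = Subgroup.closure S)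
    (hmem : σ ∈ H) :
    H = ⊤ := by
  obtain ⟨S, hS, rfl⟩ := hgen
  -- relation: swap x y ∈ H
  set H := Subgroup.closure S with hH
  have hrefl : ∀ x : Fin (n + 1), Equiv.swap x x ∈ H := by
    intro x; rw [Equiv.swap_self]; exact H.one_mem
  have htrans : ∀ a b c : Fin (n + 1), Equiv.swap a b ∈ H → Equiv.swap b c ∈ H →
      Equiv.swap a c ∈ H := by
    intro a b c hab hbc
    rcases eq_or_ne a c with rfl | hac
    · exact hrefl a
    rcases eq_or_ne a b with rfl | hab'
    · exact hbc
    · have := Equiv.swap_mul_swap_mul_swap hab' hac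
      rw [Equiv.swap_comm c a] at this
      rw [← this]
      exact H.mul_mem (H.mul_mem hbc hab) hbc
  have hsymm : ∀ a b : Fin (n + 1), Equiv.swap a b ∈ H → Equiv.swap b a ∈ H := by
    intro a b h; rwa [Equiv.swap_comm]
  -- every element of H relates x to h x
  have hpres : ∀ h ∈ H, ∀ x : Fin (n + 1), Equiv.swap x (h x) ∈ H := by
    intro h hh
    induction hh using Subgroup.closure_induction with
    | mem τ hτ =>
      intro x
      obtain ⟨a, b, hab, rfl⟩ := hS τ hτ
      rcases eq_or_ne x a with rfl | hxa
      · rw [Equiv.swap_apply_left]; exact Subgroup.subset_closure hτ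
      rcases eq_or_ne x b with rfl | hxb
      · rw [Equiv.swap_apply_right]
        exact hsymm _ _ (Subgroup.subset_closure hτ)
      · rw [Equiv.swap_apply_of_ne_of_ne hxa hxb]; exact hrefl x
    | one => intro x; simpa using hrefl x
    | mul g k hg hk ihg ihk =>
      intro x
      have : (g * k) x = g (k x) := Equiv.Perm.mul_apply g k x
      rw [this]
      exact htrans _ _ _ (ihk x) (ihg (k x))
    | inv g hg ihg =>
      intro x
      have := ihg (g⁻¹ x)
      rw [show g (g⁻¹ x) = x from g.apply_symm_apply x] at this
      exact hsymm _ _ this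
  -- σ has full support
  have hsupp : ∀ x : Fin (n + 1), σ x ≠ x := by
    intro x
    have : σ.support = Finset.univ := Finset.eq_univ_of_card _ (by simp [hlen])
    have : x ∈ σ.support := this ▸ Finset.mem_univ x
    exact Equiv.Perm.mem_support.1 this
  -- powers of σ
  have hpow : ∀ (k : ℕ) (x : Fin (n + 1)), Equiv.swap x ((σ ^ k) x) ∈ H := by
    intro k
    induction k with
    | zero => intro x; simpa using hrefl x
    | succ k ih =>
      intro x
      have h1 := ih x
      have h2 := hpres σ hmem ((σ ^ k) x)
      have : (σ ^ (k + 1)) x = σ ((σ ^ k) x) := by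
        rw [pow_succ', Equiv.Perm.mul_apply]
      rw [this]
      exact htrans _ _ _ h1 h2
  -- all swaps in H
  have hall : ∀ x y : Fin (n + 1), Equiv.swap x y ∈ H := by
    intro x y
    obtain ⟨k, hk⟩ := hσ.exists_pow_eq (hsupp x) (hsupp y)
    rw [← hk]; exact hpow k x
  rw [eq_top_iff, ← Equiv.Perm.closure_isSwap, Subgroup.closure_le]
  rintro τ ⟨a, b, -, rfl⟩
  exact hall a b
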